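/- Let Ω ⊆ ℝⁿ be open, let B ⋐ Ω be a ball and let u ∈ BV^𝔸_loc(Ω). Then there exists a linear map a : ℝⁿ → V such that 𝔸a = (𝔸u)_B, i.e. the constant W-valued function Σ_{α=1}^n 𝔸_α(a e_α) equals the mean value (𝔸u)_B; in particular, (𝔸u)_B belongs to the effective range ℛ(𝔸) = span{ξ ⊗_𝔸 v : ξ ∈ ℝⁿ, v ∈ V}. -/

import Mathlib

open MeasureTheory Filter Metric Set
open scoped Topology ENNReal NNReal

noncomputable section

/-- `n`-dimensional Euclidean space. -/
abbrev Euc (n : ℕ) := EuclideanSpace ℝ (Fin n)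

section Defs

variable {n : ℕ} {V W : Type*}
  [NormedAddCommGroup V] [InnerProductSpace ℝ V] [FiniteDimensional ℝ V]
  [NormedAddCommGroup W] [InnerProductSpace ℝ W] [FiniteDimensional ℝ W]

/-- `ξ ⊗_𝔸 v = ∑ α, ξ α • 𝔸 α v`. -/
def otimesA (A : Fin n → V →L[ℝ] W) (ξ : Euc n) (v : V) : W := ∑ α, ξ α • A α v

/-- Pointwise action `𝔸 u (x) = ∑ α, 𝔸 α (∂_α u x)` of the operator `𝔸` on a map `u`. -/
def pwA (A : Fin n → V →L[ℝ] W) (u : Euc n → V) (x : Euc n) : W :=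
  ∑ α, A α (fderiv ℝ u x (EuclideanSpace.single α 1))

/-- Smooth compactly supported scalar test functions on `U`. -/
def IsTest (U : Set (Euc n)) (φ : Euc n → ℝ) : Prop :=
  ContDiff ℝ (⊤ : ℕ∞) φ ∧ HasCompactSupport φ ∧ tsupport φ ⊆ U

/-- Smooth compactly supported `V`-valued test maps on `U`. -/
def IsTestV (U : Set (Euc n)) (ζ : Euc n → V) : Prop :=
  ContDiff ℝ (⊤ : ℕ∞) ζ ∧ HasCompactSupport ζ ∧ tsupport ζ ⊆ U

/-- `𝔸` is ℂ-elliptic: the complexified symbol map `𝔸[ξ]` is injective for every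
`ξ ∈ ℂⁿ \ {0}`.  A vector of the complexification of `V` is encoded as a pair
`(v₁, v₂) = v₁ + i v₂`, and the two displayed equations are the real and imaginary
parts of `𝔸[ξ](v₁ + i v₂) = 0`. -/
def CElliptic (A : Fin n → V →L[ℝ] W) : Prop :=
  ∀ ξ : Fin n → ℂ, ξ ≠ 0 → ∀ v₁ v₂ : V,
    (∑ α, ((ξ α).re • A α v₁ - (ξ α).im • A α v₂)) = 0 →
    (∑ α, ((ξ α).re • A α v₂ + (ξ α).im • A α v₁)) = 0 →
    v₁ = 0 ∧ v₂ = 0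

/-- `(μ, σ)` is the total-variation/polar representation of the distributional
`𝔸`-gradient of `u` on `U`, i.e. `u ∈ BV^𝔸_loc(U)` with `𝔸 u = σ ⬝ μ` and `|𝔸 u| = μ`. -/
structure HasAGradLoc (A : Fin n → V →L[ℝ] W) (U : Set (Euc n))
    (u : Euc n → V) (μ : Measure (Euc n)) (σ : Euc n → W) : Prop where
  locint : ∀ K : Set (Euc n), K ⊆ U → IsCompact K → IntegrableOn u K volume
  suppU : μ Uᶜ = 0
  locfin : ∀ K : Set (Euc n), K ⊆ U → IsCompact K → μ K < ⊤
  polar : ∀ᵐ x ∂μ, ‖σ x‖ = 1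
  ibp : ∀ φ : Euc n → ℝ, IsTest U φ →
    ∫ x, φ x • σ x ∂μ =
      - ∫ x, ∑ α, fderiv ℝ φ x (EuclideanSpace.single α 1) • A α (u x)

/-- `u ∈ BV^𝔸(U)` with `𝔸 u = σ ⬝ μ`, `|𝔸 u| = μ`. -/
structure HasAGrad (A : Fin n → V →L[ℝ] W) (U : Set (Euc n))
    (u : Euc n → V) (μ : Measure (Euc n)) (σ : Euc n → W)
    extends HasAGradLoc A U u μ σ : Prop where
  int : IntegrableOn u U volume
  fin : μ Set.univ < ⊤

/-- The mean value `(𝔸 u)_B = 𝔸u(B)/ℒⁿ(B)` of the `𝔸`-gradient represented by `(μ, σ)`. -/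
def meanA (μ : Measure (Euc n)) (σ : Euc n → W) (B : Set (Euc n)) : W :=
  (volume B).toReal⁻¹ • ∫ x in B, σ x ∂μ

/-- The reference integrand `V₁(t) = √(1+t²) - 1`. -/
def V1 (t : ℝ) : ℝ := Real.sqrt (1 + t ^ 2) - 1

/-- `V₁` of the norm of a vector. -/
def V1v {Z : Type*} [NormedAddCommGroup Z] (z : Z) : ℝ := V1 ‖z‖

/-- The (strong) recession function `f^∞(w) = limsup_{t → ∞} f(t w)/t`. -/
def recession (f : W → ℝ) (w : W) : ℝ := limsup (fun t : ℝ => f (t • w) / t) atTop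

/-- The measure-extended integral `∫_ω f(𝔸u - w₀ ℒⁿ)` of the `𝔸`-gradient represented by
`(μ, σ)`, shifted by `w₀ ∈ W`:
`∫_ω f(d𝔸ᵃu/dℒⁿ - w₀) dx + ∫_ω f^∞(d𝔸ˢu/d|𝔸ˢu|) d|𝔸ˢu|`. -/
def extInt (f : W → ℝ) (ω : Set (Euc n)) (μ : Measure (Euc n)) (σ : Euc n → W)
    (w₀ : W) : ℝ :=
  (∫ x in ω, f ((μ.rnDeriv volume x).toReal • σ x - w₀)) +
    ∫ x in ω, recession f (σ x) ∂(μ.singularPart volume)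

/-- (H1), growth part: `f` is of linear growth with constant `L`. -/
def LinearGrowth (f : W → ℝ) (L : ℝ) : Prop := 0 < L ∧ ∀ z, |f z| ≤ L * (1 + ‖z‖)

/-- (H1), regularity part: `f ∈ C^{2,1}_loc(W)`. -/
def C21loc (f : W → ℝ) : Prop :=
  ContDiff ℝ 2 f ∧
    ∀ K : Set W, IsCompact K → ∃ C : ℝ≥0, LipschitzOnWith C (iteratedFDeriv ℝ 2 f) K

/-- `𝔸`-quasi-convexity of an integrand `F`. -/
def AQuasiconvex (A : Fin n → V →L[ℝ] W) (F : W → ℝ) : Prop :=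
  ∀ w : W, ∀ ζ : Euc n → V, IsTestV (ball (0 : Euc n) 1) ζ →
    F w ≤ ⨍ x in ball (0 : Euc n) 1, F (w + pwA A ζ x) ∂volume

/-- (H2): `f` is strongly `V₁`-`𝔸`-quasi-convex with constant `ν > 0`. -/
def StronglyQC (A : Fin n → V →L[ℝ] W) (f : W → ℝ) (ν : ℝ) : Prop :=
  0 < ν ∧ AQuasiconvex A (fun w => f w - ν * V1 ‖w‖)

/-- The `(n-1)`-dimensional Hausdorff (surface) measure on `ℝⁿ`. -/
def surf (n : ℕ) : Measure (Euc n) := μH[(n : ℝ) - 1]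

/-- Gagliardo seminorm (to the `p`-th power) on an `(n-1)`-dimensional surface `S`. -/
def gagS (p θ : ℝ) (S : Set (Euc n)) (w : Euc n → V) : ℝ≥0∞ :=
  ∫⁻ x in S, ∫⁻ y in S,
    ENNReal.ofReal (‖w x - w y‖ ^ p / ‖x - y‖ ^ ((n : ℝ) - 1 + θ * p)) ∂(surf n) ∂(surf n)

/-- Gagliardo seminorm (to the `p`-th power) on a subset of `ℝⁿ`. -/
def gagB (p θ : ℝ) (s : Set (Euc n)) (w : Euc n → V) : ℝ≥0∞ :=
  ∫⁻ x in s, ∫⁻ y in s,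
    ENNReal.ofReal (‖w x - w y‖ ^ p / ‖x - y‖ ^ ((n : ℝ) + θ * p)) ∂volume ∂volume

/-- `b ∈ 𝒩(𝔸)`: `b` is locally integrable and `𝔸 b = 0` in the sense of distributions. -/
def InNullSpace (A : Fin n → V →L[ℝ] W) (b : Euc n → V) : Prop :=
  (∀ K : Set (Euc n), IsCompact K → IntegrableOn b K volume) ∧
    ∀ φ : Euc n → ℝ, IsTest Set.univ φ →
      ∫ x, ∑ α, fderiv ℝ φ x (EuclideanSpace.single α 1) • A α (b x) = 0

/-- `Au` is the weak (function-valued) `𝔸`-gradient of `u` on `U`. -/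
def WeakAGradOn (A : Fin n → V →L[ℝ] W) (U : Set (Euc n)) (u : Euc n → V)
    (Au : Euc n → W) : Prop :=
  (∀ K : Set (Euc n), K ⊆ U → IsCompact K →
      IntegrableOn u K volume ∧ IntegrableOn Au K volume) ∧
    ∀ φ : Euc n → ℝ, IsTest U φ →
      ∫ x, φ x • Au x =
        - ∫ x, ∑ α, fderiv ℝ φ x (EuclideanSpace.single α 1) • A α (u x)

/-- `Du` is the weak (full) gradient of `u` on `U`. -/
def WeakGradOn (U : Set (Euc n)) (u : Euc n → V) (Du : Euc n → (Euc n →L[ℝ] V)) : Prop :=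
  (∀ K : Set (Euc n), K ⊆ U → IsCompact K →
      IntegrableOn u K volume ∧ IntegrableOn Du K volume) ∧
    ∀ φ : Euc n → ℝ, IsTest U φ → ∀ α : Fin n,
      ∫ x, φ x • Du x (EuclideanSpace.single α 1) =
        - ∫ x, fderiv ℝ φ x (EuclideanSpace.single α 1) • u x

/-- `𝔸 u` computed from a weak gradient `Du`. -/
def pwAD (A : Fin n → V →L[ℝ] W) (Du : Euc n → (Euc n →L[ℝ] V)) (x : Euc n) : W :=
  ∑ α, A α (Du x (EuclideanSpace.single α 1))

/-- Open bounded Lipschitz domain: near every boundary point the domain is, in suitable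
orthonormal coordinates, the epigraph of a Lipschitz function. -/
def IsLipschitzDomain (D : Set (Euc n)) : Prop :=
  IsOpen D ∧ Bornology.IsBounded D ∧ D.Nonempty ∧
    ∀ x ∈ frontier D, ∃ (K : ℝ≥0) (φ : EuclideanSpace ℝ (Fin (n - 1)) → ℝ)
      (e : Euc n ≃ₗᵢ[ℝ] WithLp 2 (EuclideanSpace ℝ (Fin (n - 1)) × ℝ)) (r : ℝ),
      0 < r ∧ LipschitzWith K φ ∧
        ball x r ∩ D =
          {y ∈ ball x r |
            φ ((WithLp.equiv 2 (EuclideanSpace ℝ (Fin (n - 1)) × ℝ)) (e (y - x))).1 <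
              ((WithLp.equiv 2 (EuclideanSpace ℝ (Fin (n - 1)) × ℝ)) (e (y - x))).2}

/-- `T` is the (interior) trace of `u` on `∂D`. -/
def IsInnerTraceOn (D : Set (Euc n)) (u T : Euc n → V) : Prop :=
  ∀ᵐ x ∂((surf n).restrict (frontier D)),
    Tendsto (fun ρ => ⨍ y in ball x ρ ∩ D, ‖u y - T x‖ ∂volume) (𝓝[>] (0 : ℝ)) (𝓝 0)

/-- `ν` is the measure-theoretic outer unit normal of `D` at `x`. -/
def IsOuterNormalAt (D : Set (Euc n)) (x ν : Euc n) : Prop :=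
  ‖ν‖ = 1 ∧
    Tendsto (fun ρ =>
        volume {y ∈ ball x ρ ∩ D | 0 < (inner ℝ (y - x) ν : ℝ)} / volume (ball x ρ))
      (𝓝[>] (0 : ℝ)) (𝓝 0) ∧
    Tendsto (fun ρ =>
        volume {y ∈ ball x ρ \ D | (inner ℝ (y - x) ν : ℝ) < 0} / volume (ball x ρ))
      (𝓝[>] (0 : ℝ)) (𝓝 0)

/-- An a.e. outer unit normal field on `∂D`. -/
def IsNormalField (D : Set (Euc n)) (νf : Euc n → Euc n) : Prop :=
  ∀ᵐ x ∂((surf n).restrict (frontier D)), IsOuterNormalAt D x (νf x)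

/-- The boundary penalty term `∫_{∂D} f^∞(ν_{∂D} ⊗_𝔸 T) dH^{n-1}` (with `T` the trace of
`v - g` on `∂D`). -/
def penalty (f : W → ℝ) (A : Fin n → V →L[ℝ] W) (D : Set (Euc n))
    (νf : Euc n → Euc n) (T : Euc n → V) : ℝ :=
  ∫ x in frontier D, recession f (otimesA A (νf x) (T x)) ∂(surf n)

/-- The relaxed functional `F̄_g[v; D]`, where `(μ, σ)` represents `𝔸 v` on `D` and `T` is
the trace of `v - g` on `∂D`. -/
def relaxedF (f : W → ℝ) (A : Fin n → V →L[ℝ] W) (D : Set (Euc n))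
    (μ : Measure (Euc n)) (σ : Euc n → W) (νf : Euc n → Euc n) (T : Euc n → V) : ℝ :=
  extInt f D μ σ 0 + penalty f A D νf T

/-- `u ∈ BV^𝔸_loc(Ω)`, with `𝔸 u` represented by `(μ, σ)`, is a local generalised minimiser
of the functional associated to `f`:  `F̄_u[u; D] ≤ F̄_u[ζ; D]` for every open bounded
Lipschitz domain `D ⋐ Ω` and every `ζ ∈ BV^𝔸(D)`.  (Note `Tr_D(u - u) = 0` and
`Tr_D(ζ - u) = Tr_D ζ - Tr_D u`.) -/
def IsLocGenMin (f : W → ℝ) (A : Fin n → V →L[ℝ] W) (Ω : Set (Euc n))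
    (u : Euc n → V) (μ : Measure (Euc n)) (σ : Euc n → W) : Prop :=
  HasAGradLoc A Ω u μ σ ∧
    ∀ D : Set (Euc n), IsLipschitzDomain D → closure D ⊆ Ω →
      ∀ (ζ : Euc n → V) (μζ : Measure (Euc n)) (σζ : Euc n → W), HasAGrad A D ζ μζ σζ →
        ∀ Tu Tζ : Euc n → V, IsInnerTraceOn D u Tu → IsInnerTraceOn D ζ Tζ →
          ∀ νf : Euc n → Euc n, IsNormalField D νf →
            relaxedF f A D (μ.restrict D) σ νf (fun _ => (0 : V)) ≤
              relaxedF f A D μζ σζ νf (fun x => Tζ x - Tu x)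

/-- `u` coincides a.e. on `s` with a map of class `C^{1,a}(s)`. -/
def C1HolderOn (u : Euc n → V) (s : Set (Euc n)) (a : ℝ) : Prop :=
  ∃ v : Euc n → V, (∀ᵐ x ∂(volume.restrict s), u x = v x) ∧ ContDiffOn ℝ 1 v s ∧
    ∃ C : ℝ, ∀ x ∈ s, ∀ y ∈ s,
      ‖fderivWithin ℝ v s x - fderivWithin ℝ v s y‖ ≤ C * ‖x - y‖ ^ a

/-- The normalised excess `Excess*(u; x, r)` of the `𝔸`-gradient represented by `(μ, σ)`. -/
def excessStar (μ : Measure (Euc n)) (σ : Euc n → W) (x : Euc n) (r : ℝ) : ℝ :=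
  extInt V1v (ball x r) μ σ (meanA μ σ (ball x r)) / (volume (ball x r)).toReal

/-- The singular set `Σ_u` of a `BV^𝔸_loc`-map whose `𝔸`-gradient is represented
by `(μ, σ)`. -/
def singularSet (μ : Measure (Euc n)) (σ : Euc n → W) (Ω : Set (Euc n)) : Set (Euc n) :=
  {x ∈ Ω | limsup (fun r : ℝ => ENNReal.ofReal ‖meanA μ σ (ball x r)‖) (𝓝[>] (0 : ℝ)) = ⊤} ∪
    {x ∈ Ω | 0 < liminf (fun r : ℝ => ENNReal.ofReal (excessStar μ σ x r)) (𝓝[>] (0 : ℝ))}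

end Defs
/-- Auxiliary: a linear map on Euclidean space with prescribed values on the basis. -/
lemma exists_linear_map_euc {n : ℕ} {V : Type*} [AddCommGroup V] [Module ℝ V]
    (v : Fin n → V) : ∃ a : Euc n →ₗ[ℝ] V, ∀ α, a (EuclideanSpace.single α 1) = v α := by
  refine ⟨{ toFun := fun ξ => ∑ α, ξ α • v α,
            map_add' := by intro ξ η; simp [PiLp.add_apply, add_smul, Finset.sum_add_distrib],
            map_smul' := by intro c ξ; simp [PiLp.smul_apply, smul_smul, Finset.smul_sum] }, ?_⟩
  intro α
  simp [EuclideanSpace.single_apply, ite_smul, Finset.sum_ite_eq']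

/-- Auxiliary: the inner radii of our bump functions eventually exceed any `d < r`. -/
lemma eventually_le_rI (r : ℝ) (d : ℝ) (hd : d < r) :
    ∀ᶠ k : ℕ in atTop, d ≤ r * (1 - 1/((k:ℝ)+2)) := by
  have h : Tendsto (fun k : ℕ => r * (1 - 1/((k:ℝ)+2))) atTop (𝓝 (r * (1 - 0))) := by
    apply Tendsto.const_mul
    apply Tendsto.const_sub
    simp only [one_div]
    exact Tendsto.comp tendsto_inv_atTop_zero
      (tendsto_atTop_add_const_right _ _ tendsto_natCast_atTop_atTop)
  rw [mul_sub, mul_zero, sub_zero] at h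
  exact h.eventually_const_le (by linarith)

/-- For `u ∈ BV^𝔸_loc(Ω)` and a ball `B ⋐ Ω` there is a linear map
`a : ℝⁿ → V` with `𝔸 a = (𝔸 u)_B`; in particular `(𝔸 u)_B` lies in the effective range
`ℛ(𝔸) = span{ξ ⊗_𝔸 v}`. -/
theorem statement7
    {n : ℕ} {V W : Type*}
    [NormedAddCommGroup V] [InnerProductSpace ℝ V] [FiniteDimensional ℝ V]
    [NormedAddCommGroup W] [InnerProductSpace ℝ W] [FiniteDimensional ℝ W]
    (A : Fin n → V →L[ℝ] W)
    (Ω : Set (Euc n)) (hΩ : IsOpen Ω)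
    (u : Euc n → V) (μ : Measure (Euc n)) (σ : Euc n → W)
    (hu : HasAGradLoc A Ω u μ σ)
    (x₀ : Euc n) (r : ℝ) (hr : 0 < r) (hB : closure (ball x₀ r) ⊆ Ω) :
    (∃ a : Euc n →ₗ[ℝ] V,
        (∑ α, A α (a (EuclideanSpace.single α 1))) = meanA μ σ (ball x₀ r)) ∧
      meanA μ σ (ball x₀ r) ∈
        Submodule.span ℝ {w : W | ∃ (ξ : Euc n) (v : V), w = otimesA A ξ v} := by
  classical
  set B := ball x₀ r with hBdef
  set S : Submodule ℝ W :=
    Submodule.span ℝ {w : W | ∃ (ξ : Euc n) (v : V), w = otimesA A ξ v} with hSdef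
  have hAmem : ∀ (α : Fin n) (z : V), A α z ∈ S := by
    intro α z
    apply Submodule.subset_span
    refine ⟨EuclideanSpace.single α 1, z, ?_⟩
    simp [otimesA, EuclideanSpace.single_apply, ite_smul, Finset.sum_ite_eq']
  have hBcl : closure B = closedBall x₀ r := closure_ball x₀ (ne_of_gt hr)
  have hcomp : IsCompact (closedBall x₀ r) := isCompact_closedBall x₀ r
  have hsubΩ : closedBall x₀ r ⊆ Ω := hBcl ▸ hB
  have hμfin : μ (closedBall x₀ r) < ⊤ := hu.locfin _ hsubΩ hcomp
  -- the bump functions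
  have hrIpos : ∀ k : ℕ, 0 < r * (1 - 1/((k:ℝ)+2)) := by
    intro k
    have h2 : (0:ℝ) < (k:ℝ)+2 := by positivity
    have h3 : 1/((k:ℝ)+2) < 1 := by rw [div_lt_one h2]; linarith
    nlinarith
  have hrIO : ∀ k : ℕ, r * (1 - 1/((k:ℝ)+2)) < r * (1 - 1/(2*((k:ℝ)+2))) := by
    intro k
    have h2 : (0:ℝ) < (k:ℝ)+2 := by positivity
    apply mul_lt_mul_of_pos_left _ hr
    have h3 : 1/(2*((k:ℝ)+2)) < 1/((k:ℝ)+2) := by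
      apply one_div_lt_one_div_of_lt h2; linarith
    linarith
  set φ : ℕ → ContDiffBump x₀ := fun k =>
    ⟨r * (1 - 1/((k:ℝ)+2)), r * (1 - 1/(2*((k:ℝ)+2))), hrIpos k, hrIO k⟩ with hφdef
  have hrOr : ∀ k : ℕ, (φ k).rOut < r := by
    intro k
    show r * (1 - 1/(2*((k:ℝ)+2))) < r
    have h2 : (0:ℝ) < 2*((k:ℝ)+2) := by positivity
    have h3 : 0 < 1/(2*((k:ℝ)+2)) := by positivity
    nlinarith
  have hsupp : ∀ k, tsupport (φ k) ⊆ B := by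
    intro k
    rw [(φ k).tsupport_eq]
    exact closedBall_subset_ball (hrOr k)
  have htest : ∀ k, IsTest Ω (φ k) := fun k =>
    ⟨(φ k).contDiff, (φ k).hasCompactSupport,
      (hsupp k).trans (subset_closure.trans hB)⟩
  have hsuppmem : ∀ k, ∀ x : Euc n, φ k x ≠ 0 → x ∈ B := by
    intro k x hx
    exact hsupp k (subset_tsupport _ hx)
  -- key: the integral of σ over B lies in S
  have key : (∫ x in B, σ x ∂μ) ∈ S := by
    by_cases hInt : Integrable σ (μ.restrict B)
    swap
    · rw [integral_undef hInt]; exact S.zero_mem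
    obtain ⟨g, hgsm, hgae⟩ := hInt.aestronglyMeasurable
    have hbad : μ ({x | ¬ σ x = g x} ∩ B) = 0 := by
      have h1 := hgae
      rw [EventuallyEq, ae_iff] at h1
      rwa [Measure.restrict_apply' measurableSet_ball] at h1
    have hgood : ∀ᵐ x ∂μ, x ∉ ({x | ¬ σ x = g x} ∩ B) :=
      measure_eq_zero_iff_ae_notMem.mp hbad
    have hφσeq : ∀ k, (fun x => φ k x • σ x) =ᵐ[μ] fun x => φ k x • g x := by
      intro k
      filter_upwards [hgood] with x hx
      by_cases hφ0 : φ k x = 0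
      · simp [hφ0]
      · have hxB : x ∈ B := hsuppmem k x hφ0
        have hσ : σ x = g x := by
          by_contra h
          exact hx ⟨h, hxB⟩
        rw [hσ]
    have hφsm : ∀ k, AEStronglyMeasurable (fun x => φ k x • σ x) μ := fun k =>
      (((φ k).continuous.aestronglyMeasurable).smul hgsm.aestronglyMeasurable).congr
        (hφσeq k).symm
    have hdom : Integrable ((closedBall x₀ r).indicator fun _ => (1:ℝ)) μ := by
      rw [integrable_indicator_iff measurableSet_closedBall]
      exact integrableOn_const hμfin.ne
    have hbound : ∀ k, Integrable (fun x => φ k x • σ x) μ := by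
      intro k
      refine Integrable.mono' hdom (hφsm k) ?_
      filter_upwards [hu.polar] with x hσ1
      by_cases hx : x ∈ closedBall x₀ r
      · rw [indicator_of_mem hx, norm_smul, Real.norm_eq_abs, hσ1, mul_one,
          abs_of_nonneg (φ k).nonneg]
        exact (φ k).le_one
      · have hφ0 : φ k x = 0 := by
          by_contra h
          exact hx (ball_subset_closedBall (hsuppmem k x h))
        rw [indicator_of_notMem hx]
        simp [hφ0]
    -- orthogonality argument
    rw [← Submodule.orthogonal_orthogonal S, Submodule.mem_orthogonal]
    intro w hw
    have hwA : ∀ (α : Fin n) (z : V), (inner ℝ w (A α z) : ℝ) = 0 := by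
      intro α z
      rw [real_inner_comm]
      exact (Submodule.mem_orthogonal S w).mp hw (A α z) (hAmem α z)
    have hzero : ∀ k, ∫ x, φ k x * (inner ℝ w (σ x) : ℝ) ∂μ = 0 := by
      intro k
      have h1 : (inner ℝ w (∫ x, φ k x • σ x ∂μ) : ℝ)
          = ∫ x, φ k x * (inner ℝ w (σ x) : ℝ) ∂μ := by
        rw [← integral_inner (hbound k) w]
        congr 1
        ext x
        rw [real_inner_smul_right]
      rw [← h1, hu.ibp (φ k) (htest k), inner_neg_right]
      by_cases hF : Integrable
          (fun x => ∑ α, fderiv ℝ (φ k) x (EuclideanSpace.single α 1) • A α (u x)) volume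
      · rw [← integral_inner hF w]
        have : ∀ x : Euc n,
            (inner ℝ w (∑ α, fderiv ℝ (φ k) x (EuclideanSpace.single α 1) • A α (u x)) : ℝ)
              = 0 := by
          intro x
          rw [inner_sum]
          refine Finset.sum_eq_zero fun α _ => ?_
          rw [real_inner_smul_right, hwA, mul_zero]
        simp only [this, integral_zero, neg_zero]
      · rw [integral_undef hF, inner_zero_right, neg_zero]
    have hFmeas : ∀ k, AEStronglyMeasurable (fun x => φ k x * (inner ℝ w (σ x) : ℝ)) μ := by
      intro k
      have heq : (fun x => φ k x * (inner ℝ w (σ x) : ℝ))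
          =ᵐ[μ] fun x => φ k x * (inner ℝ w (g x) : ℝ) := by
        filter_upwards [hgood] with x hx
        by_cases hφ0 : φ k x = 0
        · simp [hφ0]
        · have hxB : x ∈ B := hsuppmem k x hφ0
          have hσ : σ x = g x := by
            by_contra h
            exact hx ⟨h, hxB⟩
          rw [hσ]
      exact (((φ k).continuous.aestronglyMeasurable).mul
        (stronglyMeasurable_const.inner hgsm).aestronglyMeasurable).congr heq.symm
    have hdomw : Integrable ((closedBall x₀ r).indicator fun _ => ‖w‖) μ := by
      rw [integrable_indicator_iff measurableSet_closedBall]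
      exact integrableOn_const hμfin.ne
    have hDCT : Tendsto (fun k => ∫ x, φ k x * (inner ℝ w (σ x) : ℝ) ∂μ) atTop
        (𝓝 (∫ x, B.indicator (fun x => (inner ℝ w (σ x) : ℝ)) x ∂μ)) := by
      refine tendsto_integral_of_dominated_convergence
        ((closedBall x₀ r).indicator fun _ => ‖w‖) hFmeas hdomw ?_ ?_
      · intro k
        filter_upwards [hu.polar] with x hσ1
        by_cases hx : x ∈ closedBall x₀ r
        · rw [indicator_of_mem hx, Real.norm_eq_abs, abs_mul]
          calc |φ k x| * |(inner ℝ w (σ x) : ℝ)| ≤ 1 * (‖w‖ * ‖σ x‖) := by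
                refine mul_le_mul ?_ (abs_real_inner_le_norm w (σ x)) (abs_nonneg _)
                  zero_le_one
                rw [abs_of_nonneg (φ k).nonneg]; exact (φ k).le_one
            _ = ‖w‖ := by rw [hσ1, mul_one, one_mul]
        · have hφ0 : φ k x = 0 := by
            by_contra h
            exact hx (ball_subset_closedBall (hsuppmem k x h))
          rw [indicator_of_notMem hx]
          simp [hφ0]
      · refine Eventually.of_forall fun x => ?_
        by_cases hxB : x ∈ B
        · rw [indicator_of_mem hxB]
          have hd : dist x x₀ < r := mem_ball.mp hxB
          have hev : (fun k : ℕ => φ k x * (inner ℝ w (σ x) : ℝ))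
              =ᶠ[atTop] fun _ => (inner ℝ w (σ x) : ℝ) := by
            filter_upwards [eventually_le_rI r (dist x x₀) hd] with k hk
            rw [(φ k).one_of_mem_closedBall (mem_closedBall.mpr hk), one_mul]
          exact Tendsto.congr' hev.symm tendsto_const_nhds
        · rw [indicator_of_notMem hxB]
          have hzero : ∀ k : ℕ, φ k x * (inner ℝ w (σ x) : ℝ) = 0 := by
            intro k
            have hφ0 : φ k x = 0 := by
              by_contra h
              exact hxB (hsuppmem k x h)
            rw [hφ0, zero_mul]
          simp only [hzero]
          exact tendsto_const_nhds
    have hzero' : Tendsto (fun k => ∫ x, φ k x * (inner ℝ w (σ x) : ℝ) ∂μ) atTop (𝓝 0) := by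
      simp only [hzero]
      exact tendsto_const_nhds
    have hlim0 : ∫ x, B.indicator (fun x => (inner ℝ w (σ x) : ℝ)) x ∂μ = 0 :=
      (tendsto_nhds_unique hDCT hzero')
    rw [← integral_inner hInt w, ← integral_indicator measurableSet_ball]
    exact hlim0
  have hmean : meanA μ σ B ∈ S := by
    unfold meanA
    exact S.smul_mem _ key
  refine ⟨?_, hmean⟩
  let T : (Fin n → V) →ₗ[ℝ] W :=
    { toFun := fun v => ∑ α, A α (v α)
      map_add' := by intro v₁ v₂; simp [map_add, Finset.sum_add_distrib]
      map_smul' := by intro c v; simp [_root_.map_smul, Finset.smul_sum] }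
  have hle : S ≤ LinearMap.range T := by
    rw [hSdef]
    apply Submodule.span_le.mpr
    rintro _ ⟨ξ, v, rfl⟩
    refine ⟨fun α => ξ α • v, ?_⟩
    simp [T, otimesA, _root_.map_smul]
  obtain ⟨v, hv⟩ := hle hmean
  obtain ⟨a, ha⟩ := exists_linear_map_euc v
  refine ⟨a, ?_⟩
  simp only [ha]
  exact hv
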